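/- arXiv:2510.11069 — 3 statements merged into one kernel-verified Lean document; each statement's English description precedes it below -/
import Mathlib

section
/- Let L be a finitely generated free module over the p-adic integers Z_p and let f : L → L be a Z_p-linear map. If the rank of Ker(f) is r and A is the torsion submodule of Coker(f), then the kernel of the induced map f ⊗ 1 : L/p^n L → L/p^n L has cardinality p^{n r} · |A / p^n A|. -/
open Pointwise

set_option synthInstance.maxHeartbeats 1000000
set_option maxHeartbeats 1000000

section Helpers

variable {R M N : Type*} [CommRing R] [AddCommGroup M] [Module R M] [AddCommGroup N] [Module R N]

lemma mem_smul_top_iff' (c : R) (x : M) :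
    x ∈ c • (⊤ : Submodule R M) ↔ ∃ y, c • y = x := by
  constructor
  · rintro ⟨y, -, rfl⟩; exact ⟨y, rfl⟩
  · rintro ⟨y, rfl⟩; exact Submodule.smul_mem_pointwise_smul y c ⊤ trivial

lemma smul_top_self_eq_span (c : R) :
    c • (⊤ : Submodule R R) = Ideal.span {c} := by
  ext x
  rw [mem_smul_top_iff', Ideal.mem_span_singleton]
  constructor
  · rintro ⟨y, rfl⟩; exact ⟨y, by rw [smul_eq_mul, mul_comm]⟩
  · rintro ⟨y, rfl⟩; exact ⟨y, by rw [smul_eq_mul, mul_comm]⟩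

lemma map_smul_top_of_surjective (c : R) (f : M →ₗ[R] N) (hf : Function.Surjective f) :
    (c • (⊤ : Submodule R M)).map f = c • (⊤ : Submodule R N) := by
  rw [Submodule.map_pointwise_smul, Submodule.map_top, LinearMap.range_eq_top.mpr hf]

lemma map_mkQ_self (Q : Submodule R M) : Q.map Q.mkQ = ⊥ := by
  rw [eq_bot_iff]
  rintro x ⟨y, hy, rfl⟩
  simpa using (Submodule.Quotient.mk_eq_zero Q).mpr hy

/-- quotient of product by pointwise-smul of top is product of quotients -/
noncomputable def prodQuotEquiv (c : R) :
    ((M × N) ⧸ (c • (⊤ : Submodule R (M × N)))) ≃ₗ[R]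
      (M ⧸ (c • (⊤ : Submodule R M))) × (N ⧸ (c • (⊤ : Submodule R N))) := by
  have h : c • (⊤ : Submodule R (M × N)) =
      (c • (⊤ : Submodule R M)).prod (c • (⊤ : Submodule R N)) := by
    ext x
    rw [mem_smul_top_iff', Submodule.mem_prod, mem_smul_top_iff', mem_smul_top_iff']
    constructor
    · rintro ⟨y, rfl⟩; exact ⟨⟨y.1, rfl⟩, ⟨y.2, rfl⟩⟩
    · rintro ⟨⟨y1, h1⟩, ⟨y2, h2⟩⟩; exact ⟨(y1, y2), Prod.ext h1 h2⟩
  have hsurj : Function.Surjective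
      ((((c • (⊤ : Submodule R M)).mkQ).prodMap ((c • (⊤ : Submodule R N)).mkQ))) :=
    Function.Surjective.prodMap (Submodule.mkQ_surjective _) (Submodule.mkQ_surjective _)
  have hker : LinearMap.ker (((c • (⊤ : Submodule R M)).mkQ).prodMap
      ((c • (⊤ : Submodule R N)).mkQ)) =
      (c • (⊤ : Submodule R M)).prod (c • (⊤ : Submodule R N)) := by
    rw [LinearMap.ker_prodMap, Submodule.ker_mkQ, Submodule.ker_mkQ]
  exact (Submodule.quotEquivOfEq _ _ (h.trans hker.symm)).trans
    ((((c • (⊤ : Submodule R M)).mkQ).prodMap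
      ((c • (⊤ : Submodule R N)).mkQ)).quotKerEquivOfSurjective hsurj)

lemma smul_top_pi {ι : Type*} [Fintype ι] (c : R) :
    c • (⊤ : Submodule R (ι → R)) =
      Submodule.pi Set.univ (fun _ : ι => c • (⊤ : Submodule R R)) := by
  ext x
  rw [mem_smul_top_iff', Submodule.mem_pi]
  constructor
  · rintro ⟨y, rfl⟩ i _; exact (mem_smul_top_iff' c _).mpr ⟨y i, rfl⟩
  · intro h
    choose y hy using fun i => (mem_smul_top_iff' c (x i)).mp (h i trivial)
    exact ⟨y, funext hy⟩

/-- quotient of a free module by `c • ⊤`. -/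
noncomputable def freeQuotEquiv {ι : Type*} [Fintype ι]
    (b : Module.Basis ι R M) (c : R) :
    (M ⧸ (c • (⊤ : Submodule R M))) ≃ₗ[R] (ι → R ⧸ (Ideal.span {c})) :=
  letI := Classical.decEq ι
  have e1 : (M ⧸ (c • (⊤ : Submodule R M))) ≃ₗ[R]
      ((ι → R) ⧸ (c • (⊤ : Submodule R (ι → R)))) :=
    Submodule.Quotient.equiv _ (c • (⊤ : Submodule R (ι → R))) b.equivFun
      (by
        show Submodule.map b.equivFun.toLinearMap (c • ⊤) = c • ⊤
        rw [Submodule.map_pointwise_smul, Submodule.map_top, LinearEquiv.range])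
  have e2 : ((ι → R) ⧸ (c • (⊤ : Submodule R (ι → R)))) ≃ₗ[R]
      ((ι → R) ⧸ Submodule.pi Set.univ (fun _ : ι => c • (⊤ : Submodule R R))) :=
    Submodule.quotEquivOfEq _ _ (smul_top_pi c)
  have e3 : ((ι → R) ⧸ Submodule.pi Set.univ (fun _ : ι => c • (⊤ : Submodule R R))) ≃ₗ[R]
      (ι → R ⧸ (c • (⊤ : Submodule R R))) := Submodule.quotientPi _
  have e4 : (ι → R ⧸ (c • (⊤ : Submodule R R))) ≃ₗ[R] (ι → R ⧸ (Ideal.span {c})) :=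
    LinearEquiv.piCongrRight fun _ =>
      Submodule.quotEquivOfEq _ _ (smul_top_self_eq_span c)
  e1.trans (e2.trans (e3.trans e4))

end Helpers

/-- `ℤ_[p] ⧸ (pⁿ) ≃ ZMod (pⁿ)`. -/
noncomputable def padicQuotEquiv (p : ℕ) [Fact p.Prime] (n : ℕ) :
    (ℤ_[p] ⧸ Ideal.span {(p : ℤ_[p]) ^ n}) ≃+* ZMod (p ^ n) :=
  (Ideal.quotEquivOfEq (PadicInt.ker_toZModPow n).symm).trans
    (RingHom.quotientKerEquivOfSurjective
      (ZMod.ringHom_surjective (PadicInt.toZModPow n)))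

lemma card_padic_quot (p : ℕ) [Fact p.Prime] (n : ℕ) :
    Nat.card (ℤ_[p] ⧸ Ideal.span {(p : ℤ_[p]) ^ n}) = p ^ n := by
  rw [Nat.card_congr (padicQuotEquiv p n).toEquiv, Nat.card_eq_fintype_card, ZMod.card]

lemma card_free_quot (p : ℕ) [Fact p.Prime] {M : Type*} [AddCommGroup M] [Module ℤ_[p] M]
    {ι : Type*} [Fintype ι] (b : Module.Basis ι ℤ_[p] M) (n : ℕ) :
    Nat.card (M ⧸ ((p : ℤ_[p]) ^ n • (⊤ : Submodule ℤ_[p] M))) = p ^ (n * Fintype.card ι) := by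
  rw [Nat.card_congr (freeQuotEquiv b ((p : ℤ_[p]) ^ n)).toEquiv, Nat.card_pi]
  simp only [card_padic_quot]
  rw [Finset.prod_const, Finset.card_univ, ← pow_mul]

/-- Let `L` be a finitely generated free module over the `p`-adic integers
and `f : L → L` a linear map. If the rank of `Ker f` is `r` and `A` is the torsion
submodule of `Coker f`, then the kernel of the induced map `f ⊗ 1 : L/pⁿL → L/pⁿL`
has cardinality `p^(n·r) · |A/pⁿA|`. -/
theorem stmt3 (p : ℕ) [Fact p.Prime] (L : Type*) [AddCommGroup L] [Module ℤ_[p] L]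
    [Module.Free ℤ_[p] L] [Module.Finite ℤ_[p] L] (f : L →ₗ[ℤ_[p]] L) (n : ℕ)
    (r : ℕ) (hr : Module.finrank ℤ_[p] (LinearMap.ker f) = r) :
    Nat.card (LinearMap.ker (Submodule.mapQ
        ((p : ℤ_[p]) ^ n • (⊤ : Submodule ℤ_[p] L))
        ((p : ℤ_[p]) ^ n • (⊤ : Submodule ℤ_[p] L)) f (by
          intro x hx
          rw [Submodule.mem_comap]
          obtain ⟨y, -, rfl⟩ := Submodule.mem_map.mp hx
          exact Submodule.mem_map.mpr ⟨f y, trivial, (map_smul f _ y).symm⟩))) =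
      p ^ (n * r) *
        Nat.card ((Submodule.torsion ℤ_[p] (L ⧸ LinearMap.range f)) ⧸
          ((p : ℤ_[p]) ^ n •
            (⊤ : Submodule ℤ_[p] (Submodule.torsion ℤ_[p] (L ⧸ LinearMap.range f))))) := by
  set S : Submodule ℤ_[p] L := (p : ℤ_[p]) ^ n • (⊤ : Submodule ℤ_[p] L) with hS
  set g : (L ⧸ S) →ₗ[ℤ_[p]] (L ⧸ S) := Submodule.mapQ S S f (by
          intro x hx
          rw [Submodule.mem_comap]
          obtain ⟨y, -, rfl⟩ := Submodule.mem_map.mp hx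
          exact Submodule.mem_map.mpr ⟨f y, trivial, (map_smul f _ y).symm⟩) with hg
  set C := L ⧸ LinearMap.range f with hC
  set T : Submodule ℤ_[p] C := Submodule.torsion ℤ_[p] C with hT
  -- instances
  haveI : Module.Finite ℤ_[p] C := Module.Finite.quotient ℤ_[p] _
  haveI : Module.Finite ℤ_[p] T := by
    haveI : IsNoetherian ℤ_[p] C := inferInstance
    exact Module.Finite.iff_fg.mpr (IsNoetherian.noetherian T)
  haveI : Module.Free ℤ_[p] (C ⧸ T) := Module.free_of_finite_type_torsion_free'
  -- rank computation : finrank (C ⧸ T) = r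
  have hT0 : Module.rank ℤ_[p] T = 0 := by
    rw [rank_eq_zero_iff]
    intro x
    obtain ⟨a, ha⟩ := x.2
    refine ⟨(a : ℤ_[p]), nonZeroDivisors.coe_ne_zero a, ?_⟩
    ext
    simpa [Submonoid.smul_def] using ha
  have hrange_lt : Module.rank ℤ_[p] (LinearMap.range f) < Cardinal.aleph0 :=
    lt_of_le_of_lt (Submodule.rank_le _) (Module.rank_lt_aleph0 ℤ_[p] L)
  have hkerr : Module.rank ℤ_[p] (LinearMap.ker f) = (r : Cardinal) := by
    rw [← hr, Module.finrank_eq_rank]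
  have h1 := Submodule.rank_quotient_add_rank (LinearMap.ker f)
  have h2 := Submodule.rank_quotient_add_rank (LinearMap.range f)
  have h3 := Submodule.rank_quotient_add_rank T
  have e1 : Module.rank ℤ_[p] (L ⧸ LinearMap.ker f) =
      Module.rank ℤ_[p] (LinearMap.range f) := f.quotKerEquivRange.rank_eq
  have hCrank : Module.rank ℤ_[p] C = (r : Cardinal) := by
    have : Module.rank ℤ_[p] C + Module.rank ℤ_[p] (LinearMap.range f) =
        (r : Cardinal) + Module.rank ℤ_[p] (LinearMap.range f) := by
      rw [h2, ← h1, e1, hkerr, add_comm]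
    exact Cardinal.eq_of_add_eq_add_right this hrange_lt
  have hFrank : Module.rank ℤ_[p] (C ⧸ T) = (r : Cardinal) := by
    rw [← hCrank, ← h3, hT0, add_zero]
  have hfr : Module.finrank ℤ_[p] (C ⧸ T) = r := Module.finrank_eq_of_rank_eq hFrank
  -- cardinality of the free part
  let bF := Module.Free.chooseBasis ℤ_[p] (C ⧸ T)
  have hcardF : Nat.card ((C ⧸ T) ⧸ ((p : ℤ_[p]) ^ n • (⊤ : Submodule ℤ_[p] (C ⧸ T)))) =
      p ^ (n * r) := by
    rw [card_free_quot p bF n, ← Module.finrank_eq_card_chooseBasisIndex, hfr]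
  -- L ⧸ S is finite
  let bL := Module.Free.chooseBasis ℤ_[p] L
  haveI : Finite (ℤ_[p] ⧸ Ideal.span {(p : ℤ_[p]) ^ n}) :=
    Finite.of_equiv _ (padicQuotEquiv p n).toEquiv.symm
  haveI hfinV : Finite (L ⧸ S) := by
    have e := (freeQuotEquiv bL ((p : ℤ_[p]) ^ n)).toEquiv
    exact Finite.of_equiv _ e.symm
  -- counting: card (ker g) = card (coker g)
  have hcount : Nat.card (LinearMap.ker g) =
      Nat.card ((L ⧸ S) ⧸ LinearMap.range g) := by
    have c1 := Submodule.card_eq_card_quotient_mul_card (LinearMap.ker g)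
    have c2 := Submodule.card_eq_card_quotient_mul_card (LinearMap.range g)
    have e2 : Nat.card ((L ⧸ S) ⧸ LinearMap.ker g) = Nat.card (LinearMap.range g) :=
      Nat.card_congr g.quotKerEquivRange.toEquiv
    have hpos : 0 < Nat.card (LinearMap.range g) := Nat.card_pos
    rw [e2] at c1
    rw [c1] at c2
    -- c2 : card ker * card range = card range * card quot
    have h5 := c2.symm
    rw [mul_comm (Nat.card (LinearMap.range g))] at h5
    exact (Nat.eq_of_mul_eq_mul_right hpos h5).symm
  -- coker g ≃ L ⧸ (S ⊔ range f)
  have hrg : LinearMap.range g = (LinearMap.range f).map S.mkQ := by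
    have hcomp : g.comp S.mkQ = S.mkQ.comp f := Submodule.mapQ_mkQ S S f
    have h4 : LinearMap.range g = LinearMap.range (g.comp S.mkQ) := by
      rw [LinearMap.range_comp, Submodule.range_mkQ, Submodule.map_top]
    rw [h4, hcomp, LinearMap.range_comp]
  have e5 : ((L ⧸ S) ⧸ LinearMap.range g) ≃ₗ[ℤ_[p]]
      (L ⧸ (S ⊔ LinearMap.range f)) := by
    have hmap : LinearMap.range g = (S ⊔ LinearMap.range f).map S.mkQ := by
      rw [Submodule.map_sup, map_mkQ_self, bot_sup_eq, hrg]
    exact (Submodule.quotEquivOfEq _ _ hmap).trans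
      (Submodule.quotientQuotientEquivQuotient S (S ⊔ LinearMap.range f) le_sup_left)
  -- C ⧸ pⁿC ≃ L ⧸ (S ⊔ range f)
  have e6 : (C ⧸ ((p : ℤ_[p]) ^ n • (⊤ : Submodule ℤ_[p] C))) ≃ₗ[ℤ_[p]]
      (L ⧸ (S ⊔ LinearMap.range f)) := by
    have hmap : (p : ℤ_[p]) ^ n • (⊤ : Submodule ℤ_[p] C) =
        (S ⊔ LinearMap.range f).map (LinearMap.range f).mkQ := by
      rw [Submodule.map_sup, map_mkQ_self, sup_bot_eq, hS,
        map_smul_top_of_surjective _ _ (Submodule.mkQ_surjective _)]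
    exact (Submodule.quotEquivOfEq _ _ hmap).trans
      (Submodule.quotientQuotientEquivQuotient (LinearMap.range f)
        (S ⊔ LinearMap.range f) le_sup_right)
  -- splitting : C ≃ T × (C ⧸ T)
  obtain ⟨s, hs⟩ := Module.projective_lifting_property T.mkQ
    (LinearMap.id : (C ⧸ T) →ₗ[ℤ_[p]] (C ⧸ T)) (Submodule.mkQ_surjective T)
  have e7 : C ≃ₗ[ℤ_[p]] (T × (C ⧸ T)) :=
    (lequivProdOfRightSplitExact T.injective_subtype
      (by rw [Submodule.range_subtype, Submodule.ker_mkQ]) hs).symm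
  have e8 : (C ⧸ ((p : ℤ_[p]) ^ n • (⊤ : Submodule ℤ_[p] C))) ≃ₗ[ℤ_[p]]
      ((T × (C ⧸ T)) ⧸ ((p : ℤ_[p]) ^ n • (⊤ : Submodule ℤ_[p] (T × (C ⧸ T))))) :=
    Submodule.Quotient.equiv _ _ e7 (by
      show Submodule.map e7.toLinearMap _ = _
      rw [Submodule.map_pointwise_smul, Submodule.map_top, LinearEquiv.range])
  -- put everything together
  calc Nat.card (LinearMap.ker g)
      = Nat.card ((L ⧸ S) ⧸ LinearMap.range g) := hcount
    _ = Nat.card (L ⧸ (S ⊔ LinearMap.range f)) := Nat.card_congr e5.toEquiv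
    _ = Nat.card (C ⧸ ((p : ℤ_[p]) ^ n • (⊤ : Submodule ℤ_[p] C))) :=
        (Nat.card_congr e6.toEquiv).symm
    _ = Nat.card ((T ⧸ ((p : ℤ_[p]) ^ n • (⊤ : Submodule ℤ_[p] T))) ×
          ((C ⧸ T) ⧸ ((p : ℤ_[p]) ^ n • (⊤ : Submodule ℤ_[p] (C ⧸ T))))) := by
        rw [Nat.card_congr e8.toEquiv,
          Nat.card_congr (prodQuotEquiv ((p : ℤ_[p]) ^ n)
            (M := T) (N := C ⧸ T)).toEquiv]
    _ = p ^ (n * r) * Nat.card (T ⧸ ((p : ℤ_[p]) ^ n • (⊤ : Submodule ℤ_[p] T))) := by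
        rw [Nat.card_prod, hcardF, mul_comm]
end

section
/- Let L be a finite free Z_p-module, f : L → L linear with kernel of rank r, and A the torsion of Coker(f). If the number of nonzero elementary divisors of the mod p^{k+1} reduction of f equals rank(L) - r, then the exponent of A divides p^k. -/
open Finset Matrix

section Rside
variable {p : ℕ} [Fact p.Prime] {k : ℕ}

lemma aux_neZero : NeZero (p ^ (k+1)) := ⟨pow_ne_zero _ (Fact.out (p := p.Prime)).ne_zero⟩

lemma aux_dvd_pk {x : ZMod (p ^ (k+1))} (hx : x ≠ 0) : x ∣ (p : ZMod (p ^ (k+1)))^k := by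
  haveI := aux_neZero (p := p) (k := k)
  have hp := Fact.out (p := p.Prime)
  set m := x.val with hm
  have hxm : ((m : ℕ) : ZMod (p^(k+1))) = x := ZMod.natCast_val x |>.trans (ZMod.cast_id _ _)
  have hm0 : m ≠ 0 := by
    intro h; apply hx; rw [← hxm, h]; simp
  have hmlt : m < p ^ (k+1) := ZMod.val_lt x
  set s := m.factorization p with hs
  have hps : p ^ s ∣ m := Nat.ordProj_dvd m p
  have hnd : ¬ p ∣ m / p ^ s := Nat.not_dvd_ordCompl hp hm0
  have hsk : s ≤ k := by
    by_contra hgt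
    have : p ^ (k+1) ∣ m := dvd_trans (pow_dvd_pow p (by omega)) hps
    exact absurd (Nat.le_of_dvd (Nat.pos_of_ne_zero hm0) this) (by omega)
  obtain ⟨t, ht⟩ := hps
  have hpt : ¬ p ∣ t := by
    intro hpt; apply hnd; rw [ht, Nat.mul_div_cancel_left _ (pow_pos hp.pos s)]; exact hpt
  have htu : IsUnit ((t : ℕ) : ZMod (p^(k+1))) := by
    rw [ZMod.isUnit_iff_coprime]
    exact Nat.Coprime.pow_right _ ((hp.coprime_iff_not_dvd.mpr hpt).symm)
  obtain ⟨u, hu⟩ := htu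
  -- x = p^s * t, so x ∣ p^s ∣ p^k
  have hxe : x = (p : ZMod (p^(k+1)))^s * (u : ZMod (p^(k+1))) := by
    rw [← hxm, ht]; push_cast; rw [hu]
  have h1 : x ∣ (p : ZMod (p^(k+1)))^s := by
    refine ⟨(u⁻¹ : (ZMod (p^(k+1)))ˣ), ?_⟩
    rw [hxe, mul_assoc, ← Units.val_mul, mul_inv_cancel, Units.val_one, mul_one]
  exact h1.trans (pow_dvd_pow _ hsk)

end Rside
open Finset

section Rside
variable {p : ℕ} [Fact p.Prime] {k : ℕ}

lemma aux_span_eq_zmultiples {m : ℕ} (x : ZMod m) :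
    (Ideal.span {x} : Set (ZMod m)) = (AddSubgroup.zmultiples x : Set (ZMod m)) := by
  ext y
  simp only [SetLike.mem_coe, Ideal.mem_span_singleton', AddSubgroup.mem_zmultiples_iff]
  constructor
  · rintro ⟨a, rfl⟩
    exact ⟨(a.cast : ℤ), by rw [zsmul_eq_mul, ZMod.intCast_cast, ZMod.cast_id]⟩
  · rintro ⟨n, rfl⟩
    exact ⟨(n : ZMod m), by rw [zsmul_eq_mul]⟩

lemma aux_card_span {m : ℕ} (x : ZMod m) :
    Nat.card (Ideal.span {x} : Ideal (ZMod m)) = addOrderOf x := by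
  rw [← Nat.card_zmultiples x]
  exact Nat.card_congr (Equiv.setCongr (aux_span_eq_zmultiples x))

lemma aux_card_span_pk :
    Nat.card (Ideal.span {(p : ZMod (p^(k+1)))^k} : Ideal (ZMod (p^(k+1)))) = p := by
  have hp := Fact.out (p := p.Prime)
  have h1 : ((p : ZMod (p^(k+1))))^k = ((p^k : ℕ) : ZMod (p^(k+1))) := by push_cast; ring
  rw [aux_card_span, h1, ZMod.addOrderOf_coe _ (pow_ne_zero _ hp.ne_zero)]
  rw [Nat.gcd_eq_right (pow_dvd_pow p k.le_succ)]
  rw [pow_succ, Nat.mul_div_cancel_left _ (pow_pos hp.pos k)]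

lemma aux_card_span_zero {m : ℕ} [NeZero m] :
    Nat.card (Ideal.span {(0 : ZMod m)} : Ideal (ZMod m)) = 1 := by
  rw [Ideal.span_singleton_eq_bot.mpr rfl]
  simp

end Rside
open Finset

section piGen
variable {R : Type*} [CommRing R] {l : ℕ}

noncomputable def piEquiv (S : Fin l → Ideal R) :
    (Submodule.pi Set.univ S : Submodule R (Fin l → R)) ≃ ∀ j, S j where
  toFun x j := ⟨x.1 j, x.2 j (Set.mem_univ j)⟩
  invFun y := ⟨fun j => y j, fun j _ => (y j).2⟩
  left_inv x := rfl
  right_inv y := rfl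

lemma aux_card_pi (S : Fin l → Ideal R) :
    Nat.card (Submodule.pi Set.univ S : Submodule R (Fin l → R)) = ∏ j, Nat.card (S j) := by
  rw [Nat.card_congr (piEquiv S), Nat.card_pi]

lemma aux_pi_sup (S T : Fin l → Ideal R) :
    (Submodule.pi Set.univ S ⊔ Submodule.pi Set.univ T : Submodule R (Fin l → R)) =
      Submodule.pi Set.univ (fun j => S j ⊔ T j) := by
  apply le_antisymm
  · apply sup_le <;> intro x hx j _
    · exact Submodule.mem_sup_left (hx j (Set.mem_univ j))
    · exact Submodule.mem_sup_right (hx j (Set.mem_univ j))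
  · intro x hx
    have h : ∀ j, ∃ s ∈ S j, ∃ t ∈ T j, s + t = x j := fun j =>
      Submodule.mem_sup.mp (hx j (Set.mem_univ j))
    choose s hs t ht hst using h
    rw [Submodule.mem_sup]
    exact ⟨s, fun j _ => hs j, t, fun j _ => ht j, funext hst⟩

lemma aux_range_diagonal (c : Fin l → R) :
    LinearMap.range (Matrix.diagonal c).mulVecLin =
      Submodule.pi Set.univ (fun j => Ideal.span {c j}) := by
  ext x
  simp only [LinearMap.mem_range, Submodule.mem_pi, Set.mem_univ, forall_true_left,
    Ideal.mem_span_singleton, Matrix.mulVecLin_apply]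
  constructor
  · rintro ⟨w, rfl⟩ j
    rw [Matrix.mulVec_diagonal]
    exact Dvd.intro _ rfl
  · intro h
    choose w hw using fun j => (h j)
    exact ⟨w, funext fun j => by rw [Matrix.mulVec_diagonal]; exact (hw j).symm⟩
end piGen
open Finset

section mapCard
variable {R : Type*} [CommRing R] {l : ℕ}

lemma aux_unit_bij {U : Matrix (Fin l) (Fin l) R} (hU : IsUnit U) :
    Function.Bijective U.mulVecLin := by
  obtain ⟨u, rfl⟩ := hU
  constructor
  · intro x y hxy
    have h := congrArg (Matrix.mulVecLin (↑u⁻¹ : Matrix (Fin l) (Fin l) R)) hxy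
    simpa [← Matrix.mulVecLin_mul, ← LinearMap.comp_apply, u.inv_mul] using h
  · intro y
    refine ⟨(↑u⁻¹ : Matrix (Fin l) (Fin l) R).mulVecLin y, ?_⟩
    have : (((u : Matrix (Fin l) (Fin l) R) * (↑u⁻¹ : Matrix (Fin l) (Fin l) R)).mulVecLin) y = y := by
      rw [u.mul_inv]; simp
    rw [Matrix.mulVecLin_mul] at this
    exact this

lemma aux_map_card {U : Matrix (Fin l) (Fin l) R} (hU : IsUnit U)
    (S : Submodule R (Fin l → R)) :
    Nat.card (Submodule.map U.mulVecLin S) = Nat.card S :=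
  (Nat.card_congr (Submodule.equivMapOfInjective _ (aux_unit_bij hU).1 S).toEquiv).symm

lemma aux_map_pK_le (A : Matrix (Fin l) (Fin l) R) (r : R) :
    Submodule.map A.mulVecLin (Submodule.pi Set.univ fun _ => Ideal.span {r}) ≤
      Submodule.pi Set.univ fun _ => Ideal.span {r} := by
  rintro _ ⟨x, hx, rfl⟩
  have h : ∀ j, ∃ c, x j = r * c := fun j =>
    Ideal.mem_span_singleton.mp (hx j (Set.mem_univ j))
  choose w hw using h
  have hx' : x = r • w := funext hw
  intro j _
  rw [Matrix.mulVecLin_apply, hx', Matrix.mulVec_smul]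
  exact Ideal.mem_span_singleton.mpr (Dvd.intro _ rfl)

lemma aux_map_pK {U : Matrix (Fin l) (Fin l) R} (hU : IsUnit U) (r : R) :
    Submodule.map U.mulVecLin (Submodule.pi Set.univ fun _ => Ideal.span {r}) =
      Submodule.pi Set.univ fun _ => Ideal.span {r} := by
  refine le_antisymm (aux_map_pK_le U r) ?_
  obtain ⟨u, rfl⟩ := hU
  intro x hx
  refine ⟨(↑u⁻¹ : Matrix (Fin l) (Fin l) R).mulVecLin x, ?_, ?_⟩
  · exact aux_map_pK_le (↑u⁻¹) r ⟨x, hx, rfl⟩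
  · show ((u : Matrix (Fin l) (Fin l) R).mulVecLin ∘ₗ (↑u⁻¹ : Matrix (Fin l) (Fin l) R).mulVecLin) x = x
    rw [← Matrix.mulVecLin_mul, u.mul_inv]; simp

end mapCard

section count
variable {p : ℕ} [Fact p.Prime] {k l : ℕ}

local notation "R" => ZMod (p^(k+1))

lemma aux_card_sup_pK (c : Fin l → R) :
    Nat.card ((Submodule.pi Set.univ fun j => Ideal.span {c j}) ⊔
        (Submodule.pi Set.univ fun _ => Ideal.span {(p : R)^k}) : Submodule R (Fin l → R)) =
      p ^ (univ.filter fun j => c j = 0).card *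
        Nat.card (Submodule.pi Set.univ fun j => Ideal.span {c j} : Submodule R (Fin l → R)) := by
  haveI := aux_neZero (p := p) (k := k)
  rw [aux_pi_sup, aux_card_pi, aux_card_pi]
  have key : ∀ j, Nat.card (Ideal.span {c j} ⊔ Ideal.span {(p : R)^k} : Ideal R) =
      (if c j = 0 then p else 1) * Nat.card (Ideal.span {c j} : Ideal R) := by
    intro j
    by_cases h : c j = 0
    · simp only [h, if_true]
      rw [show (Ideal.span {(0:R)} : Ideal R) = ⊥ from Ideal.span_singleton_eq_bot.mpr rfl,
        bot_sup_eq, aux_card_span_pk]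
      have hbot : Nat.card (⊥ : Ideal R) = 1 := Nat.card_unique
      rw [hbot, mul_one]
    · simp only [h, if_false, one_mul]
      have hsup : (Ideal.span {c j} : Ideal R) ⊔ Ideal.span {(p : R)^k} =
          Ideal.span {c j} := sup_eq_left.mpr
        (Ideal.span_singleton_le_span_singleton.mpr (aux_dvd_pk h))
      rw [hsup]
  calc ∏ j, Nat.card (Ideal.span {c j} ⊔ Ideal.span {(p : R)^k} : Ideal R)
      = ∏ j, (if c j = 0 then p else 1) * Nat.card (Ideal.span {c j} : Ideal R) := by
        exact Finset.prod_congr rfl fun j _ => key j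
    _ = (∏ j, if c j = 0 then p else 1) * ∏ j, Nat.card (Ideal.span {c j} : Ideal R) :=
        Finset.prod_mul_distrib
    _ = p ^ (univ.filter fun j => c j = 0).card *
          ∏ j, Nat.card (Ideal.span {c j} : Ideal R) := by
        rw [Finset.prod_ite, Finset.prod_const, Finset.prod_const_one, mul_one]

lemma aux_count {U : Matrix (Fin l) (Fin l) R} (hU : IsUnit U) (c e : Fin l → R)
    (h : Submodule.map U.mulVecLin (Submodule.pi Set.univ fun j => Ideal.span {c j}) =
      (Submodule.pi Set.univ fun j => Ideal.span {e j})) :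
    (univ.filter fun j => c j = 0).card = (univ.filter fun j => e j = 0).card := by
  haveI := aux_neZero (p := p) (k := k)
  set pK : Submodule R (Fin l → R) := Submodule.pi Set.univ fun _ => Ideal.span {(p : R)^k}
    with hpK
  set Sc : Submodule R (Fin l → R) := Submodule.pi Set.univ fun j => Ideal.span {c j}
  set Se : Submodule R (Fin l → R) := Submodule.pi Set.univ fun j => Ideal.span {e j}
  have hm : Nat.card Se = Nat.card Sc := by rw [← h, aux_map_card hU]
  have hsup : Se ⊔ pK = Submodule.map U.mulVecLin (Sc ⊔ pK) := by
    rw [Submodule.map_sup, h, aux_map_pK hU]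
  have hcards : Nat.card (Se ⊔ pK : Submodule R (Fin l → R)) =
      Nat.card (Sc ⊔ pK : Submodule R (Fin l → R)) := by
    rw [hsup, aux_map_card hU]
  rw [aux_card_sup_pK, aux_card_sup_pK, hm] at hcards
  have hpos : 0 < Nat.card Sc := by
    haveI : Nonempty Sc := ⟨0, Sc.zero_mem⟩
    exact Nat.card_pos
  have hpow : p ^ (univ.filter fun j => e j = 0).card =
      p ^ (univ.filter fun j => c j = 0).card :=
    Nat.eq_of_mul_eq_mul_right hpos hcards
  exact (Nat.pow_right_injective (Fact.out (p := p.Prime)).two_le hpow).symm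

end count

section Zp
variable {p : ℕ} [Fact p.Prime] {k l : ℕ}

lemma aux_toZModPow_surj (n : ℕ) :
    Function.Surjective (PadicInt.toZModPow (p := p) n) := by
  haveI : NeZero (p ^ n) := ⟨pow_ne_zero _ (Fact.out (p := p.Prime)).ne_zero⟩
  intro y
  obtain ⟨m, rfl⟩ := ZMod.intCast_surjective (n := p ^ n) y
  exact ⟨(m : ℤ_[p]), map_intCast _ m⟩

lemma aux_range_map_iff (A : Matrix (Fin l) (Fin l) ℤ_[p]) (x : Fin l → ZMod (p^(k+1))) :
    x ∈ LinearMap.range (A.map (PadicInt.toZModPow (k+1))).mulVecLin ↔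
      ∃ y ∈ LinearMap.range A.mulVecLin, (PadicInt.toZModPow (k+1)) ∘ y = x := by
  constructor
  · rintro ⟨w, rfl⟩
    have h : ∀ j, ∃ z : ℤ_[p], PadicInt.toZModPow (k+1) z = w j :=
      fun j => aux_toZModPow_surj (k+1) (w j)
    choose v hv using h
    refine ⟨A *ᵥ v, ⟨v, rfl⟩, ?_⟩
    funext i
    rw [Function.comp_apply, RingHom.map_mulVec, Matrix.mulVecLin_apply]
    congr 1
    funext j
    exact hv j
  · rintro ⟨y, ⟨v, rfl⟩, rfl⟩
    refine ⟨PadicInt.toZModPow (k+1) ∘ v, ?_⟩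
    funext i
    rw [Matrix.mulVecLin_apply, ← RingHom.map_mulVec, Function.comp_apply,
      Matrix.mulVecLin_apply]

lemma aux_dvd_of_toZModPow_ne {a : ℤ_[p]} (h : PadicInt.toZModPow (k+1) a ≠ 0) :
    a ∣ (p : ℤ_[p])^k := by
  have ha : a ≠ 0 := by rintro rfl; exact h (map_zero _)
  have hnd : ¬ ((p : ℤ_[p])^(k+1) ∣ a) := by
    intro hd
    apply h
    have : a ∈ RingHom.ker (PadicInt.toZModPow (p := p) (k+1)) := by
      rw [PadicInt.ker_toZModPow]
      exact Ideal.mem_span_singleton.mpr hd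
    exact this
  obtain ⟨n, hn⟩ := IsDiscreteValuationRing.associated_pow_irreducible ha PadicInt.irreducible_p
  have hnk : n ≤ k := by
    by_contra hgt
    exact hnd ((pow_dvd_pow _ (by omega)).trans hn.symm.dvd)
  exact hn.dvd.trans (pow_dvd_pow _ hnk)

end Zp

set_option maxHeartbeats 1000000 in
/-- Let `L = ℤ_p^l`, `f` the linear map given by the matrix `M`, with
kernel of rank `r`, and `A` the torsion submodule of `Coker f`.  If the mod
`p^(k+1)` reduction of `M` has Smith normal form `P · M̄ · Q = diag(d)` and the
number of nonzero elementary divisors `d j` equals `l - r`, then the exponent of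
`A` divides `p^k`. -/
theorem stmt7 (p : ℕ) [Fact p.Prime] (l k r : ℕ) (M : Matrix (Fin l) (Fin l) ℤ_[p])
    (hr : Module.finrank ℤ_[p] (LinearMap.ker M.mulVecLin) = r)
    (P Q : Matrix (Fin l) (Fin l) (ZMod (p ^ (k + 1))))
    (hP : IsUnit P) (hQ : IsUnit Q) (d : Fin l → ZMod (p ^ (k + 1)))
    (hSNF : P * M.map (PadicInt.toZModPow (k + 1)) * Q = Matrix.diagonal d)
    (hcount : (Finset.univ.filter (fun j => d j ≠ 0)).card = l - r) :
    ∀ x ∈ Submodule.torsion ℤ_[p]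
        ((Fin l → ℤ_[p]) ⧸ LinearMap.range M.mulVecLin),
      (p : ℤ_[p]) ^ k • x = 0 := by
  classical
  haveI := aux_neZero (p := p) (k := k)
  set N := LinearMap.range M.mulVecLin with hN
  obtain ⟨n, bM, bN, f, a, hsnf⟩ := N.smithNormalForm (Pi.basisFun ℤ_[p] (Fin l))
  -- extended diagonal vector
  set a' : Fin l → ℤ_[p] := fun j => if h : ∃ i, f i = j then a h.choose else 0 with ha'def
  have ha'f : ∀ i, a' (f i) = a i := by
    intro i
    have hex : ∃ i', f i' = f i := ⟨i, rfl⟩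
    have h2 : f hex.choose = f i := hex.choose_spec
    simp only [ha'def, dif_pos hex, f.injective h2]
  set B : Matrix (Fin l) (Fin l) ℤ_[p] := Matrix.of fun x j => bM j x with hBdef
  set C : Matrix (Fin l) (Fin l) ℤ_[p] := B * Matrix.diagonal a' with hCdef
  -- B is a unit
  have hBlin : Matrix.toLin' B = (bM.equivFun.symm :
      (Fin l → ℤ_[p]) ≃ₗ[ℤ_[p]] (Fin l → ℤ_[p])).toLinearMap := by
    apply LinearMap.ext
    intro v
    rw [Matrix.toLin'_apply, LinearEquiv.coe_coe, Module.Basis.equivFun_symm_apply]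
    funext x
    simp only [Matrix.mulVec, dotProduct, hBdef, Matrix.of_apply,
      Finset.sum_apply, Pi.smul_apply, smul_eq_mul, mul_comm]
  have hB : IsUnit B := by
    set Bi := LinearMap.toMatrix' ((bM.equivFun :
      (Fin l → ℤ_[p]) ≃ₗ[ℤ_[p]] (Fin l → ℤ_[p])).toLinearMap)
    have h1 : B * Bi = 1 := by
      apply Matrix.toLin'.injective
      rw [Matrix.toLin'_mul, hBlin, Matrix.toLin'_toMatrix', Matrix.toLin'_one]
      apply LinearMap.ext; intro v; simp
    have h2 : Bi * B = 1 := by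
      apply Matrix.toLin'.injective
      rw [Matrix.toLin'_mul, hBlin, Matrix.toLin'_toMatrix', Matrix.toLin'_one]
      apply LinearMap.ext; intro v; simp
    exact ⟨⟨B, Bi, h1, h2⟩, rfl⟩
  -- N is the range of C
  have hCcol : Cᵀ = fun j => a' j • bM j := by
    funext j x
    simp only [Matrix.transpose_apply, hCdef, Matrix.mul_diagonal, hBdef, Matrix.of_apply,
      Pi.smul_apply, smul_eq_mul, mul_comm]
  have hNC : N = LinearMap.range C.mulVecLin := by
    rw [Matrix.range_mulVecLin, Matrix.col_def, hCcol]
    have h1 : N = Submodule.span ℤ_[p] (Set.range fun i => a i • bM (f i)) := by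
      have hcomp : (N.subtype ∘ bN : Fin n → (Fin l → ℤ_[p])) = fun i => a i • bM (f i) :=
        funext fun i => hsnf i
      conv_lhs => rw [← Submodule.map_subtype_top N, ← bN.span_eq, Submodule.map_span,
        ← Set.range_comp, hcomp]
    rw [h1]
    apply le_antisymm
    · rw [Submodule.span_le]
      rintro _ ⟨i, rfl⟩
      apply Submodule.subset_span
      exact ⟨f i, by dsimp only; rw [ha'f]⟩
    · rw [Submodule.span_le]
      rintro _ ⟨j, rfl⟩
      by_cases hj : ∃ i, f i = j
      · obtain ⟨i, rfl⟩ := hj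
        dsimp only
        rw [ha'f]
        exact Submodule.subset_span ⟨i, rfl⟩
      · have : a' j = 0 := dif_neg hj
        dsimp only
        rw [this, zero_smul]
        exact Submodule.zero_mem _
  -- reduction mod p^(k+1)
  have hranges : LinearMap.range ((M.map (PadicInt.toZModPow (k+1))).mulVecLin) =
      LinearMap.range ((C.map (PadicInt.toZModPow (k+1))).mulVecLin) := by
    ext x
    rw [aux_range_map_iff, aux_range_map_iff, ← hN, hNC]
  set c' : Fin l → ZMod (p^(k+1)) := fun j => PadicInt.toZModPow (k+1) (a' j) with hc'def
  have hCmap : C.map (PadicInt.toZModPow (k+1)) =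
      (B.map (PadicInt.toZModPow (k+1))) * Matrix.diagonal c' := by
    rw [hCdef, Matrix.map_mul, Matrix.diagonal_map (map_zero _)]
  have hBu : IsUnit (B.map (PadicInt.toZModPow (k+1))) := by
    have h := hB.map ((PadicInt.toZModPow (p := p) (k+1)).mapMatrix)
    rwa [RingHom.mapMatrix_apply] at h
  have hrange2 : LinearMap.range ((C.map (PadicInt.toZModPow (k+1))).mulVecLin) =
      Submodule.map (B.map (PadicInt.toZModPow (k+1))).mulVecLin
        (Submodule.pi Set.univ fun j => Ideal.span {c' j}) := by
    rw [hCmap, Matrix.mulVecLin_mul, LinearMap.range_comp, aux_range_diagonal]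
  have hdpi : Submodule.map ((P * B.map (PadicInt.toZModPow (k+1))).mulVecLin)
      (Submodule.pi Set.univ fun j => Ideal.span {c' j}) =
      Submodule.pi Set.univ fun j => Ideal.span {d j} := by
    rw [← aux_range_diagonal d, ← hSNF]
    have e1 : LinearMap.range ((P * M.map (PadicInt.toZModPow (k+1)) * Q).mulVecLin) =
        Submodule.map P.mulVecLin
          (LinearMap.range ((M.map (PadicInt.toZModPow (k+1))).mulVecLin)) := by
      rw [Matrix.mulVecLin_mul, LinearMap.range_comp,
        LinearMap.range_eq_top.mpr (aux_unit_bij hQ).2, Submodule.map_top,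
        Matrix.mulVecLin_mul, LinearMap.range_comp]
    rw [e1, hranges, hrange2, ← Submodule.map_comp, ← Matrix.mulVecLin_mul]
  have hcnt : (univ.filter fun j => c' j = 0).card = (univ.filter fun j => d j = 0).card :=
    aux_count (hP.mul hBu) c' d hdpi
  -- numerology
  have hnN : Module.finrank ℤ_[p] N = n := by
    rw [Module.finrank_eq_card_basis bN, Fintype.card_fin]
  have hrank : n + r = l := by
    have h := LinearMap.rank_range_add_rank_ker M.mulVecLin
    rw [← hN] at h
    have h1 : Module.rank ℤ_[p] N = n := by
      rw [rank_eq_card_basis bN]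
      simp
    obtain ⟨m, bK⟩ := Submodule.basisOfPid (Pi.basisFun ℤ_[p] (Fin l)) (LinearMap.ker M.mulVecLin)
    have h2 : Module.rank ℤ_[p] (LinearMap.ker M.mulVecLin) = m := by
      rw [rank_eq_card_basis bK]
      simp
    have h2' : m = r := by
      rw [← hr, Module.finrank_eq_card_basis bK, Fintype.card_fin]
    have h3 : Module.rank ℤ_[p] (Fin l → ℤ_[p]) = l := rank_fin_fun l
    rw [h1, h2, h2', h3] at h
    exact_mod_cast h
  have hsumd := Finset.card_filter_add_card_filter_not
    (s := (univ : Finset (Fin l))) (p := fun j => d j ≠ 0)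
  have hfneg : (univ.filter fun j => ¬ d j ≠ 0) = (univ.filter fun j => d j = 0) := by
    apply Finset.filter_congr
    intro j _
    simp [not_not]
  rw [hfneg, hcount, Finset.card_univ, Fintype.card_fin] at hsumd
  have hsumf := Finset.card_filter_add_card_filter_not
    (s := (univ : Finset (Fin l))) (p := fun j => ∃ i, f i = j)
  have himg : (univ.filter fun j => ∃ i, f i = j) = Finset.image f univ := by
    ext j
    simp only [Finset.mem_filter, Finset.mem_univ, true_and, Finset.mem_image]
  rw [himg, Finset.card_image_of_injective _ f.injective, Finset.card_univ, Finset.card_univ,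
    Fintype.card_fin, Fintype.card_fin] at hsumf
  -- all a i are nonzero mod p^(k+1)
  have hπa : ∀ i : Fin n, PadicInt.toZModPow (k+1) (a i) ≠ 0 := by
    intro i0 h0
    have hnotmem : f i0 ∉ (univ.filter fun j => ¬ ∃ i, f i = j) := by
      simp only [Finset.mem_filter, Finset.mem_univ, true_and, not_not]
      exact ⟨i0, rfl⟩
    have hsub : insert (f i0) (univ.filter fun j => ¬ ∃ i, f i = j) ⊆
        univ.filter fun j => c' j = 0 := by
      intro j hj
      rcases Finset.mem_insert.mp hj with rfl | hj
      · simp only [Finset.mem_filter, Finset.mem_univ, true_and, hc'def]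
        rw [ha'f]
        exact h0
      · simp only [Finset.mem_filter, Finset.mem_univ, true_and] at hj ⊢
        rw [hc'def]
        dsimp only
        rw [show a' j = 0 from dif_neg hj, map_zero]
    have hcard := Finset.card_le_card hsub
    rw [Finset.card_insert_of_notMem hnotmem, hcnt] at hcard
    omega
  have ha'dvd : ∀ j, a' j ≠ 0 → a' j ∣ (p : ℤ_[p])^k := by
    intro j hj
    by_cases hex : ∃ i, f i = j
    · have he : a' j = a hex.choose := dif_pos hex
      rw [he]
      exact aux_dvd_of_toZModPow_ne (hπa _)
    · exact absurd (dif_neg hex) hj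
  -- final argument
  intro x hx
  obtain ⟨v, rfl⟩ := Submodule.Quotient.mk_surjective N x
  rw [Submodule.mem_torsion_iff] at hx
  obtain ⟨c0, hc0⟩ := hx
  have hcv : (c0 : ℤ_[p]) • v ∈ N := by
    rwa [← Submodule.Quotient.mk_smul, Submodule.Quotient.mk_eq_zero] at hc0
  rw [hNC] at hcv
  obtain ⟨w, hw⟩ := hcv
  have hBinj : Function.Injective (B.mulVecLin) := (aux_unit_bij hB).1
  obtain ⟨u, hu⟩ := hB
  set v' : Fin l → ℤ_[p] := (↑u⁻¹ : Matrix (Fin l) (Fin l) ℤ_[p]) *ᵥ v with hv'def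
  have hBv' : B *ᵥ v' = v := by
    rw [hv'def, Matrix.mulVec_mulVec, ← hu, Units.mul_inv, Matrix.one_mulVec]
  have key : Matrix.diagonal a' *ᵥ w = (c0 : ℤ_[p]) • v' := by
    apply hBinj
    show B *ᵥ (Matrix.diagonal a' *ᵥ w) = B *ᵥ ((c0 : ℤ_[p]) • v')
    rw [Matrix.mulVec_mulVec, ← hCdef, Matrix.mulVec_smul, hBv']
    exact hw
  have hc0ne : (c0 : ℤ_[p]) ≠ 0 := mem_nonZeroDivisors_iff_ne_zero.mp c0.2
  have hs : ∀ j, ∃ s, a' j * s = (p : ℤ_[p])^k * v' j := by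
    intro j
    by_cases hj : a' j = 0
    · have hv0 : v' j = 0 := by
        have hk := congrFun key j
        rw [Matrix.mulVec_diagonal, hj, zero_mul] at hk
        rcases mul_eq_zero.mp hk.symm with h | h
        · exact absurd h hc0ne
        · exact h
      exact ⟨0, by rw [hv0, mul_zero, mul_zero]⟩
    · obtain ⟨t, ht⟩ := ha'dvd j hj
      exact ⟨t * v' j, by rw [← mul_assoc, ← ht]⟩
  choose s hs' using hs
  have hmem : (p : ℤ_[p])^k • v ∈ N := by
    rw [hNC]
    refine ⟨s, ?_⟩
    show C *ᵥ s = (p : ℤ_[p])^k • v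
    have hds : Matrix.diagonal a' *ᵥ s = (p : ℤ_[p])^k • v' := by
      funext j
      rw [Matrix.mulVec_diagonal, Pi.smul_apply, smul_eq_mul]
      exact hs' j
    rw [hCdef, ← Matrix.mulVec_mulVec, hds, Matrix.mulVec_smul, hBv']
  rw [← Submodule.Quotient.mk_smul, Submodule.Quotient.mk_eq_zero]
  exact hmem
end

section
/- Let ω ∈ Z_5 be a primitive fourth root of unity and let x act on Z_5^4 by x(a,b,c,d) = ω^k(-a-b-c-d, a, b, c) with 1 ≤ k ≤ 3. Then x - 1 is invertible over Z_5 (its Smith normal form is the identity), so x has no nontrivial fixed points on (Z/5^n)^4 for any n. -/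
instance : Fact (Nat.Prime 5) := ⟨by norm_num⟩

/-- The order-5 element `t(a,b,c,d) = (-a-b-c-d, a, b, c)` of the reduced standard
representation of `Σ₅` over the `5`-adic integers. -/
noncomputable def tMat : Matrix (Fin 4) (Fin 4) ℤ_[5] :=
  !![-1, -1, -1, -1; 1, 0, 0, 0; 0, 1, 0, 0; 0, 0, 1, 0]

lemma det_aux (c : ℤ_[5]) : (c • tMat - 1).det = c ^ 4 + c ^ 3 + c ^ 2 + c + 1 := by
  simp [tMat, Matrix.det_succ_row_zero, Fin.sum_univ_succ, Matrix.one_apply]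
  simp only [show Fin.succAbove (1 : Fin 4) (2 : Fin 3) = 3 by decide,
    show Fin.succAbove (2 : Fin 4) (2 : Fin 3) = 3 by decide,
    show Fin.succAbove (3 : Fin 4) (2 : Fin 3) = 2 by decide]
  simp
  ring

set_option maxHeartbeats 1000000 in
/-- Let `ω ∈ ℤ₅` be a primitive fourth root of unity and let `x` act on
`ℤ₅⁴` by `x(a,b,c,d) = ω^k(-a-b-c-d, a, b, c)` with `1 ≤ k ≤ 3`.  Then `x - 1` is
invertible over `ℤ₅` (its Smith normal form is the identity), so `x` has no
nontrivial fixed points on `(ℤ/5ⁿ)⁴` for any `n`. -/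
theorem stmt15 (ω : ℤ_[5]) (hω4 : ω ^ 4 = 1) (hω2 : ω ^ 2 ≠ 1)
    (k : ℕ) (hk1 : 1 ≤ k) (hk3 : k ≤ 3) :
    IsUnit (ω ^ k • tMat - 1) ∧
      ∀ (n : ℕ) (v : Fin 4 → ZMod (5 ^ n)),
        ((ω ^ k • tMat).map (PadicInt.toZModPow n)).mulVec v = v → v = 0 := by
  have hsq : ω ^ 2 = -1 := by
    have h : (ω ^ 2 - 1) * (ω ^ 2 + 1) = 0 := by linear_combination hω4
    rcases mul_eq_zero.mp h with h | h
    · exact absurd (sub_eq_zero.mp h) hω2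
    · exact eq_neg_of_add_eq_zero_left h
  have hdet : (ω ^ k • tMat - 1).det = 1 := by
    rw [det_aux]
    interval_cases k
    · linear_combination hω4 + (ω + 1) * hsq
    · linear_combination (ω ^ 2 * (ω ^ 4 + 1)) * hsq
    · linear_combination (ω ^ 3 * (ω ^ 3 + 1) * (ω ^ 4 - ω ^ 2 + 1)) * hsq
  have hunit : IsUnit (ω ^ k • tMat - 1) := by
    rw [Matrix.isUnit_iff_isUnit_det, hdet]; exact isUnit_one
  refine ⟨hunit, fun n v hv => ?_⟩
  have hunit2 : IsUnit ((ω ^ k • tMat - 1).map (PadicInt.toZModPow n)) := by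
    rw [Matrix.isUnit_iff_isUnit_det, ← RingHom.mapMatrix_apply, ← RingHom.map_det, hdet,
      map_one]
    exact isUnit_one
  obtain ⟨u, hu⟩ := hunit2
  have hker : ((ω ^ k • tMat - 1).map (PadicInt.toZModPow n)).mulVec v = 0 := by
    have : (ω ^ k • tMat - 1).map (PadicInt.toZModPow n)
        = (ω ^ k • tMat).map (PadicInt.toZModPow n) - 1 := by
      rw [← RingHom.mapMatrix_apply, map_sub, map_one, RingHom.mapMatrix_apply]
    rw [this, Matrix.sub_mulVec, hv, Matrix.one_mulVec, sub_self]
  have hv' : (↑u⁻¹ : Matrix (Fin 4) (Fin 4) (ZMod (5 ^ n))).mulVec ((↑u : Matrix (Fin 4) (Fin 4) (ZMod (5 ^ n))).mulVec v) = v := by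
    rw [Matrix.mulVec_mulVec, u.inv_mul, Matrix.one_mulVec]
  rw [hu, hker, Matrix.mulVec_zero] at hv'
  exact hv'.symm
end
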